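/- arXiv:1304.3906 — 5 statements merged into one kernel-verified Lean document; each statement's English description precedes it below -/
import Mathlib

section
/- Let I be a stable monomial ideal of k[x₁,…,xₙ], let m be a monomial in I, and let m₀ ∈ G(I) be a divisor of m satisfying max(m₀) ≤ min(m/m₀). Then m₀ is the greatest element, with respect to the lexicographic order ≺, among all elements of G(I) that divide m. -/
namespace Paper

/-- A monomial of `k[x₁,…,xₙ]`, identified with its exponent vector. -/
abbrev Mon : Type := ℕ → ℕ

/-- The variable `x_k` as a monomial. -/
def e (k : ℕ) : Mon := fun i => if i = k then 1 else 0

/-- The power `x_k^l` as a monomial. -/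
def xpw (k l : ℕ) : Mon := fun i => if i = k then l else 0

/-- The support of a monomial. -/
def msupp (m : Mon) : Set ℕ := {i | m i ≠ 0}

/-- `max(m)`, the largest index of a variable dividing `m`. -/
noncomputable def mmax (m : Mon) : ℕ := sSup (msupp m)

/-- `min(m)`, the smallest index of a variable dividing `m`. -/
noncomputable def mmin (m : Mon) : ℕ := sInf (msupp m)

/-- A monomial uses only variables `x₁,…,xₙ`. -/
def inVars (n : ℕ) (m : Mon) : Prop := ∀ i, m i ≠ 0 → 1 ≤ i ∧ i ≤ n

/-- A monomial ideal of `k[x₁,…,xₙ]`, identified with its set of monomials, which is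
closed under multiplication by arbitrary monomials. -/
structure MonIdeal (n : ℕ) where
  carrier : Set Mon
  vars_mem : ∀ m ∈ carrier, inVars n m
  mul_mem : ∀ m ∈ carrier, ∀ a : Mon, inVars n a → m + a ∈ carrier

/-- `G(I)`: the set of monomials of `I` minimal under divisibility. -/
def minGens {n : ℕ} (I : MonIdeal n) : Set Mon :=
  {m | m ∈ I.carrier ∧ ∀ m' ∈ I.carrier, m' ≤ m → m' = m}

/-- `I` is stable: for every monomial `m ∈ I` and `1 ≤ i < max(m)`,
`x_i·(m/x_{max(m)}) ∈ I`. -/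
def Stable {n : ℕ} (I : MonIdeal n) : Prop :=
  ∀ m ∈ I.carrier, ∀ i : ℕ, 1 ≤ i → i < mmax m → (m - e (mmax m)) + e i ∈ I.carrier

/-- `I` is Borel fixed: for every monomial `m ∈ I` and `1 ≤ i < j` with `x_j ∣ m`,
`x_i·(m/x_j) ∈ I`. -/
def Borel {n : ℕ} (I : MonIdeal n) : Prop :=
  ∀ m ∈ I.carrier, ∀ i j : ℕ, 1 ≤ i → i < j → m j ≠ 0 → (m - e j) + e i ∈ I.carrier

/-- The lexicographic order `m ≺ m'` on monomials with `x₁ ≻ x₂ ≻ ⋯`. -/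
def mlt (m m' : Mon) : Prop := ∃ i : ℕ, (∀ j, j < i → m j = m' j) ∧ m i < m' i

/-- `g` is the Eliahou–Kervaire decomposition function of `I`: for every monomial `m ∈ I`,
`g m ∈ G(I)`, `g m` divides `m`, and `max(g m) ≤ min(m / g m)`. -/
def IsDecompFn {n : ℕ} (I : MonIdeal n) (g : Mon → Mon) : Prop :=
  ∀ m ∈ I.carrier, g m ∈ minGens I ∧ g m ≤ m ∧ mmax (g m) ≤ mmin (m - g m)

/-- `max { max(m) : m ∈ G(I) }`. -/
noncomputable def hMax {n : ℕ} (I : MonIdeal n) : ℕ :=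
  sSup {j | ∃ m ∈ minGens I, mmax m = j}

/-- For a stable monomial ideal `I`, a monomial `m ∈ I`, and a divisor
`m₀ ∈ G(I)` of `m` with `max(m₀) ≤ min(m/m₀)`, the monomial `m₀` is the greatest element,
with respect to the lexicographic order `≺`, among the elements of `G(I)` dividing `m`. -/
theorem statement0 {n : ℕ} (I : MonIdeal n) (hI : Stable I)
    (m : Mon) (hm : m ∈ I.carrier)
    (m₀ : Mon) (hm₀ : m₀ ∈ minGens I) (hdvd : m₀ ≤ m)
    (hsplit : mmax m₀ ≤ mmin (m - m₀)) :
    ∀ m' ∈ minGens I, m' ≤ m → m' = m₀ ∨ mlt m' m₀ := by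
  classical
  intro m' hm' hle
  by_cases hEq : m' = m₀
  · exact Or.inl hEq
  have hex : ∃ i, m' i ≠ m₀ i := by
    by_contra h; push_neg at h; exact hEq (funext h)
  obtain ⟨i, hne, hbelow⟩ : ∃ i, m' i ≠ m₀ i ∧ ∀ j, j < i → m' j = m₀ j :=
    ⟨Nat.find hex, Nat.find_spec hex, fun j hj => not_not.mp (Nat.find_min hex hj)⟩
  rcases lt_or_gt_of_ne hne with h | h
  · exact Or.inr ⟨i, hbelow, h⟩
  exfalso
  have hvars : inVars n m₀ := I.vars_mem m₀ hm₀.1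
  have hbdd : BddAbove (msupp m₀) := ⟨n, fun j hj => (hvars j hj).2⟩
  have hsupple : ∀ j, m₀ j ≠ 0 → j ≤ mmax m₀ := fun j hj => le_csSup hbdd hj
  by_cases hit : i < mmax m₀
  · -- below max(m₀), m agrees with m₀, contradicting m₀ i < m' i ≤ m i
    have h1 : (m - m₀) i = 0 := by
      by_contra h0
      have : mmin (m - m₀) ≤ i := Nat.sInf_le h0
      omega
    have h2 : m i - m₀ i = 0 := h1
    have h3 : m₀ i ≤ m i := hdvd i
    have h4 : m' i ≤ m i := hle i
    omega
  · -- i ≥ max(m₀): then m₀ ≤ m', contradicting minimality of m'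
    have hm0le : m₀ ≤ m' := by
      intro j
      rcases lt_trichotomy j i with hj | hj | hj
      · exact le_of_eq (hbelow j hj).symm
      · subst hj; exact Nat.le_of_lt h
      · have hj0 : m₀ j = 0 := by
          by_contra h0
          have := hsupple j h0
          omega
        simp [hj0]
    have : m₀ = m' := hm'.2 m₀ hm₀.1 hm0le
    exact hne (congrFun this.symm i)

end Paper
end

section
/- Let Δ be a simplicial complex and v a vertex not in the vertex set of Δ. If the join Δ∗⟨v⟩ is constructible, then Δ itself is constructible. -/
namespace Paper

/-- Constructible simplicial complexes (of a given dimension `d`, possibly `-1`):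
every simplex is constructible, and the union of two constructible `d`-dimensional
complexes whose intersection is constructible of dimension `d-1` is constructible. -/
inductive Constructible {V : Type*} : Set (Finset V) → ℤ → Prop
  | simplex (σ : Finset V) : Constructible {τ | τ ⊆ σ} ((σ.card : ℤ) - 1)
  | union {Δ₁ Δ₂ : Set (Finset V)} {d : ℤ} :
      Constructible Δ₁ d → Constructible Δ₂ d → Constructible (Δ₁ ∩ Δ₂) (d - 1) →
      Constructible (Δ₁ ∪ Δ₂) d

/-- An (abstract) simplicial complex: a collection of finite sets closed under
taking subsets. -/
def IsSimplicialComplex {V : Type*} (Δ : Set (Finset V)) : Prop :=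
  ∀ σ ∈ Δ, ∀ τ, τ ⊆ σ → τ ∈ Δ

/-- The join `Δ ∗ ⟨v⟩` of a simplicial complex `Δ` with a new vertex `v`. -/
def joinVertex {V : Type*} [DecidableEq V] (Δ : Set (Finset V)) (v : V) : Set (Finset V) :=
  Δ ∪ {τ | ∃ σ ∈ Δ, τ = insert v σ}

lemma empty_mem_constructible {V : Type*} {C : Set (Finset V)} {d : ℤ}
    (h : Constructible C d) : (∅ : Finset V) ∈ C := by
  induction h with
  | simplex σ => exact Finset.empty_subset σ
  | union h1 h2 h3 ih1 ih2 ih3 => exact Or.inl ih1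

lemma link_constructible {V : Type*} [DecidableEq V] (v : V) {C : Set (Finset V)} {d : ℤ}
    (h : Constructible C d) :
    {σ : Finset V | v ∉ σ ∧ insert v σ ∈ C} = ∅ ∨
      Constructible {σ : Finset V | v ∉ σ ∧ insert v σ ∈ C} (d - 1) := by
  induction h with
  | simplex σ =>
    by_cases hvσ : v ∈ σ
    · right
      have hset : {τ : Finset V | v ∉ τ ∧ insert v τ ∈ {τ | τ ⊆ σ}} =
          {τ : Finset V | τ ⊆ σ.erase v} := by
        ext τ
        simp only [Set.mem_setOf_eq]
        constructor
        · rintro ⟨h1, h2⟩ x hx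
          exact Finset.mem_erase.2 ⟨fun e => h1 (e ▸ hx), h2 (Finset.mem_insert_of_mem hx)⟩
        · intro h1
          refine ⟨fun hvτ => (Finset.mem_erase.1 (h1 hvτ)).1 rfl, ?_⟩
          intro x hx
          rcases Finset.mem_insert.1 hx with rfl | hx
          · exact hvσ
          · exact (Finset.mem_erase.1 (h1 hx)).2
      rw [hset]
      have hcard : ((σ.erase v).card : ℤ) - 1 = ((σ.card : ℤ) - 1) - 1 := by
        rw [Finset.card_erase_of_mem hvσ]
        have : 1 ≤ σ.card := Finset.card_pos.2 ⟨v, hvσ⟩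
        push_cast [Nat.cast_sub this]
        ring
      rw [← hcard]
      exact Constructible.simplex (σ.erase v)
    · left
      ext τ
      simp only [Set.mem_setOf_eq, Set.mem_empty_iff_false, iff_false]
      rintro ⟨h1, h2⟩
      exact hvσ (h2 (Finset.mem_insert_self v τ))
  | union h1 h2 h3 ih1 ih2 ih3 =>
    rename_i Δ₁ Δ₂ d'
    have hunion : {σ : Finset V | v ∉ σ ∧ insert v σ ∈ Δ₁ ∪ Δ₂} =
        {σ : Finset V | v ∉ σ ∧ insert v σ ∈ Δ₁} ∪ {σ : Finset V | v ∉ σ ∧ insert v σ ∈ Δ₂} := by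
      ext τ
      simp only [Set.mem_setOf_eq, Set.mem_union]
      tauto
    have hinter : {σ : Finset V | v ∉ σ ∧ insert v σ ∈ Δ₁ ∩ Δ₂} =
        {σ : Finset V | v ∉ σ ∧ insert v σ ∈ Δ₁} ∩ {σ : Finset V | v ∉ σ ∧ insert v σ ∈ Δ₂} := by
      ext τ
      simp only [Set.mem_setOf_eq, Set.mem_inter_iff]
      tauto
    rw [hunion]
    rcases ih1 with he1 | hc1
    · rcases ih2 with he2 | hc2
      · left; rw [he1, he2, Set.empty_union]
      · right; rw [he1, Set.empty_union]; exact hc2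
    · rcases ih2 with he2 | hc2
      · right; rw [he2, Set.union_empty]; exact hc1
      · right
        rcases ih3 with he3 | hc3
        · exfalso
          have h1' : (∅ : Finset V) ∈ {σ : Finset V | v ∉ σ ∧ insert v σ ∈ Δ₁} :=
            empty_mem_constructible hc1
          have h2' : (∅ : Finset V) ∈ {σ : Finset V | v ∉ σ ∧ insert v σ ∈ Δ₂} :=
            empty_mem_constructible hc2
          have : (∅ : Finset V) ∈ ({σ : Finset V | v ∉ σ ∧ insert v σ ∈ Δ₁ ∩ Δ₂} : Set (Finset V)) :=
            ⟨h1'.1, ⟨h1'.2, h2'.2⟩⟩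
          rw [he3] at this
          exact this
        · rw [hinter] at hc3
          exact Constructible.union hc1 hc2 hc3

/-- If `Δ` is a simplicial complex and `v` a vertex not in the vertex set
of `Δ` such that the join `Δ ∗ ⟨v⟩` is constructible, then `Δ` itself is constructible. -/
theorem statement1 {V : Type*} [DecidableEq V] (Δ : Set (Finset V))
    (hΔ : IsSimplicialComplex Δ) (v : V) (hv : ∀ σ ∈ Δ, v ∉ σ)
    (hjoin : ∃ d : ℤ, Constructible (joinVertex Δ v) d) :
    ∃ d : ℤ, Constructible Δ d := by
  obtain ⟨d, hd⟩ := hjoin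
  have hlink : {σ : Finset V | v ∉ σ ∧ insert v σ ∈ joinVertex Δ v} = Δ := by
    ext σ
    simp only [Set.mem_setOf_eq]
    constructor
    · rintro ⟨h1, h2⟩
      rcases h2 with h2 | ⟨ρ, hρ, h2⟩
      · exact absurd (Finset.mem_insert_self v σ) (hv _ h2)
      · have hρv : v ∉ ρ := hv ρ hρ
        have : σ = ρ := by
          have := congrArg (fun s => Finset.erase s v) h2
          simpa [Finset.erase_insert h1, Finset.erase_insert hρv] using this
        rw [this]; exact hρ
    · intro hσ
      exact ⟨hv σ hσ, Or.inr ⟨σ, hσ, rfl⟩⟩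
  rcases link_constructible v hd with he | hc
  · exfalso
    have h0 : (∅ : Finset V) ∈ joinVertex Δ v := empty_mem_constructible hd
    have h0' : (∅ : Finset V) ∈ Δ := by
      rcases h0 with h0 | ⟨ρ, hρ, h0⟩
      · exact h0
      · exact absurd h0.symm (Finset.insert_ne_empty v ρ)
    rw [hlink] at he
    rw [he] at h0'
    exact h0'
  · rw [hlink] at hc
    exact ⟨d - 1, hc⟩

end Paper
end

section
/- Let k be a field, S = k[x₁,…,xₙ], and let I ⊆ S be the ideal spanned by the monomials of a stable monomial ideal, and let 1 ≤ h ≤ n. If the set of associated primes of the S-module S/I is exactly {(x₁,…,x_h)} (for a stable ideal this holds precisely when S/I is Cohen–Macaulay of codimension h), then h = max{max(m) : m ∈ G(I)}, and there exists a unique positive integer l such that x_h^l ∈ G(I). -/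
namespace Paper

section Aux

open MvPolynomial

variable {K : Type*} [Field K] {n : ℕ}

/-- An exponent vector as a `Finsupp` on `Fin n` (with the index shift by 1). -/
noncomputable def toF (n : ℕ) (m : Mon) : Fin n →₀ ℕ :=
  Finsupp.equivFunOnFinite.symm (fun i : Fin n => m ((i : ℕ) + 1))

@[simp] lemma toF_apply (m : Mon) (i : Fin n) : toF n m i = m ((i : ℕ) + 1) := rfl

lemma mon_sub_add {m : Mon} {k : ℕ} (hk : m k ≠ 0) : (m - e k) + e k = m := by
  funext i
  by_cases h : i = k <;> simp [e, h] <;> omega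

lemma mon_sub_le (m a : Mon) : m - a ≤ m := fun i => Nat.sub_le _ _

lemma inVars_sub {m : Mon} (h : inVars n m) (a : Mon) : inVars n (m - a) := by
  intro i hi
  have hi' : m i - a i ≠ 0 := hi
  exact h i (by omega)

lemma inVars_of_le {m a : Mon} (h : inVars n a) (hle : m ≤ a) : inVars n m := by
  intro i hi
  have h2 : m i ≤ a i := hle i
  exact h i (by omega)

lemma mem_of_le (I : MonIdeal n) {m a : Mon} (hm : m ∈ I.carrier) (hle : m ≤ a)
    (ha : inVars n a) : a ∈ I.carrier := by
  have := I.mul_mem m hm (a - m) (inVars_sub ha m)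
  have heq : m + (a - m) = a := by
    funext i
    have h2 : m i ≤ a i := hle i
    show m i + (a i - m i) = a i
    omega
  rwa [heq] at this

lemma inVars_e {k : ℕ} (h1 : 1 ≤ k) (h2 : k ≤ n) : inVars n (e k) := by
  intro i hi
  simp [e] at hi
  rcases hi with ⟨rfl, -⟩; exact ⟨h1, h2⟩

lemma inVars_xpw {k l : ℕ} (h1 : 1 ≤ k) (h2 : k ≤ n) : inVars n (xpw k l) := by
  intro i hi
  simp [xpw] at hi
  exact hi.1 ▸ ⟨h1, h2⟩

lemma inVars_add {m a : Mon} (hm : inVars n m) (ha : inVars n a) : inVars n (m + a) := by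
  intro i hi
  have hi' : m i + a i ≠ 0 := hi
  rcases Nat.eq_zero_or_pos (m i) with h0 | h0
  · exact ha i (by omega)
  · exact hm i (by omega)

lemma msupp_bdd {m : Mon} (h : inVars n m) : BddAbove (msupp m) :=
  ⟨n, fun i hi => (h i hi).2⟩

lemma msupp_nonempty {m : Mon} (h : m ≠ 0) : (msupp m).Nonempty := by
  rcases Function.ne_iff.mp h with ⟨i, hi⟩
  exact ⟨i, hi⟩

lemma mmax_mem {m : Mon} (hv : inVars n m) (h : m ≠ 0) : m (mmax m) ≠ 0 :=
  Nat.sSup_mem (msupp_nonempty h) (msupp_bdd hv)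

lemma le_mmax {m : Mon} (hv : inVars n m) {i : ℕ} (hi : m i ≠ 0) : i ≤ mmax m :=
  le_csSup (msupp_bdd hv) hi

lemma mmax_le_n {m : Mon} (hv : inVars n m) (h : m ≠ 0) : mmax m ≤ n :=
  (hv _ (mmax_mem hv h)).2

lemma one_le_mmax {m : Mon} (hv : inVars n m) (h : m ≠ 0) : 1 ≤ mmax m :=
  (hv _ (mmax_mem hv h)).1

lemma mon_ne_zero_of_mem (I : MonIdeal n) (h0 : (0 : Mon) ∉ I.carrier) {m : Mon}
    (hm : m ∈ I.carrier) : m ≠ 0 := fun hc => h0 (hc ▸ hm)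

/-- the monomial `x^m` as a polynomial -/
noncomputable def phiM (K : Type*) [Field K] (n : ℕ) (m : Mon) : MvPolynomial (Fin n) K :=
  monomial (toF n m) 1

lemma prod_eq_phiM (m : Mon) :
    (∏ i : Fin n, (X i : MvPolynomial (Fin n) K) ^ m ((i : ℕ) + 1)) = phiM K n m := by
  rw [phiM, ← prod_X_pow_eq_monomial]
  refine (Finset.prod_subset (Finset.subset_univ _) ?_).symm
  intro x _ hx
  have h0 : m ((x : ℕ) + 1) = 0 := Finsupp.notMem_support_iff.mp hx
  rw [h0, pow_zero]

/-- the spanning set of monomials of `I` -/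
def genSet (K : Type*) [Field K] {n : ℕ} (I : MonIdeal n) : Set (MvPolynomial (Fin n) K) :=
  {f | ∃ m ∈ I.carrier, f = ∏ i : Fin n, X i ^ m ((i : ℕ) + 1)}

lemma exists_div_of_mem (I : MonIdeal n) {f : MvPolynomial (Fin n) K}
    (hf : f ∈ Ideal.span (genSet K I)) :
    ∀ d ∈ f.support, ∃ m ∈ I.carrier, toF n m ≤ d := by
  classical
  refine Submodule.span_induction ?_ ?_ ?_ ?_ hf
  · rintro g ⟨m, hm, rfl⟩ d hd
    rw [prod_eq_phiM, phiM] at hd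
    rw [support_monomial, if_neg (one_ne_zero (α := K))] at hd
    rw [Finset.mem_singleton] at hd
    exact ⟨m, hm, hd ▸ le_refl _⟩
  · intro d hd; simp at hd
  · intro p q _ _ hp hq d hd
    rcases Finset.mem_union.mp (MvPolynomial.support_add hd) with h | h
    · exact hp d h
    · exact hq d h
  · intro r p _ hp d hd
    rw [smul_eq_mul] at hd
    rcases Finset.mem_add.mp (support_mul r p hd) with ⟨d1, hd1, d2, hd2, rfl⟩
    obtain ⟨m, hm, hle⟩ := hp d2 hd2
    exact ⟨m, hm, hle.trans (by simp)⟩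

lemma phi_mem_iff (I : MonIdeal n) {J : Ideal (MvPolynomial (Fin n) K)}
    (hJ : J = Ideal.span (genSet K I)) {a : Mon} (ha : inVars n a) :
    phiM K n a ∈ J ↔ a ∈ I.carrier := by
  classical
  subst hJ
  constructor
  · intro hmem
    have hsupp : toF n a ∈ (phiM K n a).support := by
      rw [phiM, support_monomial, if_neg (one_ne_zero (α := K))]
      exact Finset.mem_singleton_self _
    obtain ⟨m, hm, hle⟩ := exists_div_of_mem I hmem (toF n a) hsupp
    have hma : m ≤ a := by
      intro i
      by_cases hi : m i = 0
      · simp [hi]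
      · obtain ⟨hi1, hi2⟩ := I.vars_mem m hm i hi
        have := hle ⟨i - 1, by omega⟩
        simpa [Nat.sub_add_cancel hi1] using this
    exact mem_of_le I hm hma ha
  · intro hmem
    exact Ideal.subset_span ⟨a, hmem, (prod_eq_phiM a).symm⟩

lemma exists_minGen_aux (I : MonIdeal n) (d : ℕ) :
    ∀ m : Mon, (∑ i ∈ Finset.range (n + 1), m i) = d → m ∈ I.carrier →
      ∃ u ∈ minGens I, u ≤ m := by
  induction d using Nat.strong_induction_on with
  | _ d ih =>
    intro m hd hm
    by_cases hmin : ∀ m' ∈ I.carrier, m' ≤ m → m' = m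
    · exact ⟨m, ⟨hm, hmin⟩, le_refl m⟩
    · push_neg at hmin
      obtain ⟨m', hm', hle, hne⟩ := hmin
      have hex : ∃ i0, m' i0 < m i0 := by
        by_contra hno
        push_neg at hno
        exact hne (funext fun i => le_antisymm (hle i) (hno i))
      obtain ⟨i0, hi0⟩ := hex
      have hi0n : i0 ∈ Finset.range (n + 1) := by
        have h1 : m i0 ≠ 0 := by omega
        have := (I.vars_mem m hm i0 h1).2
        simp
        omega
      have hlt : (∑ i ∈ Finset.range (n + 1), m' i) < d := by
        rw [← hd]
        exact Finset.sum_lt_sum (fun i _ => hle i) ⟨i0, hi0n, hi0⟩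
      obtain ⟨u, hu, hule⟩ := ih _ hlt m' rfl hm'
      exact ⟨u, hu, hule.trans hle⟩

lemma exists_minGen (I : MonIdeal n) {m : Mon} (hm : m ∈ I.carrier) :
    ∃ u ∈ minGens I, u ≤ m :=
  exists_minGen_aux I _ m rfl hm

/-- the prime `(x₁, …, x_j)` -/
noncomputable def Pj (K : Type*) [Field K] (n j : ℕ) : Ideal (MvPolynomial (Fin n) K) :=
  Ideal.span {f | ∃ i : Fin n, (i : ℕ) + 1 ≤ j ∧ f = X i}

/-- the substitution killing the first `j` variables -/
noncomputable def phij (K : Type*) [Field K] (n j : ℕ) :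
    MvPolynomial (Fin n) K →ₐ[K] MvPolynomial (Fin n) K :=
  aeval (fun i : Fin n => if (i : ℕ) + 1 ≤ j then 0 else X i)

lemma sub_phij_mem (j : ℕ) (f : MvPolynomial (Fin n) K) :
    f - phij K n j f ∈ Pj K n j := by
  induction f using MvPolynomial.induction_on with
  | C r => simp [phij, Pj]
  | add p q hp hq =>
    have : p + q - phij K n j (p + q) = (p - phij K n j p) + (q - phij K n j q) := by
      rw [map_add]; ring
    rw [this]
    exact Ideal.add_mem _ hp hq
  | mul_X p i hp =>
    have hx : phij K n j (X i) = if (i : ℕ) + 1 ≤ j then 0 else X i := by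
      rw [phij, aeval_X]
    rw [map_mul, hx]
    by_cases hij : (i : ℕ) + 1 ≤ j
    · rw [if_pos hij, mul_zero, sub_zero]
      exact Ideal.mul_mem_left _ p (Ideal.subset_span ⟨i, hij, rfl⟩)
    · rw [if_neg hij]
      have : p * X i - phij K n j p * X i = (p - phij K n j p) * X i := by ring
      rw [this]
      exact Ideal.mul_mem_right _ _ hp

lemma Pj_eq_ker (j : ℕ) : Pj K n j = RingHom.ker (phij K n j).toRingHom := by
  apply le_antisymm
  · rw [Pj, Ideal.span_le]
    rintro f ⟨i, hij, rfl⟩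
    simp only [SetLike.mem_coe, RingHom.mem_ker, AlgHom.toRingHom_eq_coe, RingHom.coe_coe]
    rw [phij, aeval_X, if_pos hij]
  · intro f hf
    have h0 : phij K n j f = 0 := hf
    have := sub_phij_mem (K := K) j f
    rwa [h0, sub_zero] at this

lemma Pj_prime (j : ℕ) : (Pj K n j).IsPrime := by
  rw [Pj_eq_ker]
  exact RingHom.ker_isPrime _

lemma X_mem_Pj {j : ℕ} {i : Fin n} (hij : (i : ℕ) + 1 ≤ j) :
    (X i : MvPolynomial (Fin n) K) ∈ Pj K n j :=
  Ideal.subset_span ⟨i, hij, rfl⟩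

lemma X_not_mem_Pj {j : ℕ} {i : Fin n} (hij : j < (i : ℕ) + 1) :
    (X i : MvPolynomial (Fin n) K) ∉ Pj K n j := by
  rw [Pj_eq_ker]
  intro hf
  have h0 : phij K n j (X i) = 0 := hf
  rw [phij, aeval_X, if_neg (by omega)] at h0
  exact X_ne_zero i h0

lemma Pj_inj {j h : ℕ} (hj1 : 1 ≤ j) (hjn : j ≤ n) (hh1 : 1 ≤ h) (hhn : h ≤ n)
    (heq : Pj K n j = Pj K n h) : j = h := by
  by_contra hne
  rcases Nat.lt_or_ge j h with hlt | hge
  · have hmem : (X (⟨h - 1, by omega⟩ : Fin n) : MvPolynomial (Fin n) K) ∈ Pj K n h :=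
      X_mem_Pj (by simp; omega)
    rw [← heq] at hmem
    exact X_not_mem_Pj (by simp; omega) hmem
  · have hlt : h < j := by omega
    have hmem : (X (⟨j - 1, by omega⟩ : Fin n) : MvPolynomial (Fin n) K) ∈ Pj K n j :=
      X_mem_Pj (by simp; omega)
    rw [heq] at hmem
    exact X_not_mem_Pj (by simp; omega) hmem

lemma X_mul_phiM (i : Fin n) (w : Mon) :
    (X i : MvPolynomial (Fin n) K) * phiM K n w = phiM K n (w + e ((i : ℕ) + 1)) := by
  rw [phiM, phiM, show (X i : MvPolynomial (Fin n) K) = monomial (Finsupp.single i 1) 1 by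
    rw [← X_pow_eq_monomial, pow_one], monomial_mul, one_mul]
  have hfs : Finsupp.single i 1 + toF n w = toF n (w + e ((i : ℕ) + 1)) := by
    ext k
    rw [Finsupp.add_apply, Finsupp.single_apply, toF_apply]
    show (if i = k then 1 else 0) + w ((k : ℕ) + 1)
        = w ((k : ℕ) + 1) + e ((i : ℕ) + 1) ((k : ℕ) + 1)
    have he : e ((i : ℕ) + 1) ((k : ℕ) + 1) = if i = k then 1 else 0 := by
      simp only [e]
      by_cases hik : i = k
      · simp [hik]
      · rw [if_neg (by simpa [Fin.ext_iff] using fun hc => hik (Fin.ext (by omega))), if_neg hik]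
    omega
  rw [hfs]

/-- extraction of a monomial supported in large variables from `f ∉ Pj` -/
lemma exists_good_mono {j : ℕ} {f : MvPolynomial (Fin n) K} (hf : f ∉ Pj K n j) :
    ∃ a ∈ f.support, ∀ i : Fin n, a i ≠ 0 → j < (i : ℕ) + 1 := by
  classical
  by_contra hno
  push_neg at hno
  apply hf
  rw [Pj_eq_ker, RingHom.mem_ker]
  show (phij K n j) f = 0
  rw [phij]
  set σ := fun i : Fin n => if (i : ℕ) + 1 ≤ j then (0 : MvPolynomial (Fin n) K) else X i with hσ
  conv_lhs => rw [f.as_sum]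
  rw [map_sum]
  refine Finset.sum_eq_zero fun a ha => ?_
  obtain ⟨i, hi, hij⟩ := hno a ha
  rw [aeval_monomial]
  have hzero : σ i = 0 := by rw [hσ]; simp [hij]
  refine mul_eq_zero_of_right _ (Finset.prod_eq_zero (Finsupp.mem_support_iff.mpr hi) ?_)
  show σ i ^ a i = 0
  rw [hzero]
  exact zero_pow hi

lemma isAssoc_Pj (I : MonIdeal n) (hI : Stable I) {J : Ideal (MvPolynomial (Fin n) K)}
    (hJ : J = Ideal.span (genSet K I)) (h0 : (0 : Mon) ∉ I.carrier)
    {m0 : Mon} (hm0 : m0 ∈ minGens I) (hall : ∀ u ∈ minGens I, mmax u ≤ mmax m0) :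
    IsAssociatedPrime (Pj K n (mmax m0)) (MvPolynomial (Fin n) K ⧸ J) := by
  classical
  have hm0c : m0 ∈ I.carrier := hm0.1
  have hm0v : inVars n m0 := I.vars_mem m0 hm0c
  have hm0ne : m0 ≠ 0 := mon_ne_zero_of_mem I h0 hm0c
  set j := mmax m0 with hjdef
  have hmj : m0 j ≠ 0 := mmax_mem hm0v hm0ne
  have hj1 : 1 ≤ j := one_le_mmax hm0v hm0ne
  have hjn : j ≤ n := mmax_le_n hm0v hm0ne
  set w : Mon := m0 - e j with hwdef
  have hwv : inVars n w := inVars_sub hm0v _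
  have hwle : w ≤ m0 := mon_sub_le _ _
  have hwj : w j = m0 j - 1 := by
    show m0 j - e j j = m0 j - 1
    simp [e]
  have hwm0 : ∀ u : Mon, u ∈ I.carrier → u ≤ w → False := by
    intro u hu hul
    have heq := hm0.2 u hu (hul.trans hwle)
    have hj2 : u j ≤ w j := hul j
    have hj3 : u j = m0 j := congrFun heq j
    omega
  refine isAssociatedPrime_iff.mpr ⟨Pj_prime j, Submodule.Quotient.mk (phiM K n w), ?_⟩
  apply le_antisymm
  · rw [Pj, Ideal.span_le]
    rintro f ⟨i, hij, rfl⟩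
    rw [SetLike.mem_coe, Submodule.mem_colon_singleton, Submodule.mem_bot, ← Submodule.Quotient.mk_smul,
      Submodule.Quotient.mk_eq_zero]
    show (X i : MvPolynomial (Fin n) K) * phiM K n w ∈ J
    rw [X_mul_phiM]
    have hwe : inVars n (w + e ((i : ℕ) + 1)) :=
      inVars_add hwv (inVars_e (by omega) (by omega))
    rw [phi_mem_iff I hJ hwe]
    rcases Nat.lt_or_ge ((i : ℕ) + 1) j with hlt | hge
    · exact hI m0 hm0c ((i : ℕ) + 1) (by omega) (by omega)
    · have : (i : ℕ) + 1 = j := by omega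
      rw [this, hwdef, mon_sub_add hmj]
      exact hm0c
  · intro f hf
    rw [Submodule.mem_colon_singleton, Submodule.mem_bot, ← Submodule.Quotient.mk_smul,
      Submodule.Quotient.mk_eq_zero] at hf
    have hfJ : f * phiM K n w ∈ J := hf
    by_contra hfP
    obtain ⟨a, haf, hgood⟩ := exists_good_mono hfP
    have hcoeff : coeff (a + toF n w) (f * phiM K n w) ≠ 0 := by
      rw [phiM, coeff_mul_monomial', if_pos le_add_self, add_tsub_cancel_right, mul_one]
      exact mem_support_iff.mp haf
    have hsupp : a + toF n w ∈ (f * phiM K n w).support := mem_support_iff.mpr hcoeff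
    rw [hJ] at hfJ
    obtain ⟨m1, hm1, hle1⟩ := exists_div_of_mem I hfJ _ hsupp
    obtain ⟨u, hu, hule⟩ := exists_minGen I hm1
    refine hwm0 u hu.1 ?_
    intro i
    by_cases hui : u i = 0
    · simp [hui]
    · have hiv := I.vars_mem u hu.1 i hui
      have hij : i ≤ j := le_trans (le_mmax (I.vars_mem u hu.1) hui) (hall u hu)
      have hu1 : u i ≤ m1 i := hule i
      have hu2 : m1 i ≤ a ⟨i - 1, by omega⟩ + w i := by
        have := hle1 ⟨i - 1, by omega⟩
        simpa [Nat.sub_add_cancel hiv.1] using this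
      have hu3 : a ⟨i - 1, by omega⟩ = 0 := by
        by_contra hane
        have := hgood _ hane
        simp at this
        omega
      have hu4 : m1 i ≤ w i := by omega
      exact le_trans hu1 hu4

lemma pure_power (I : MonIdeal n) {J : Ideal (MvPolynomial (Fin n) K)}
    (hJ : J = Ideal.span (genSet K I)) {h : ℕ} (hh1 : 1 ≤ h) (hhn : h ≤ n)
    (hass : associatedPrimes (MvPolynomial (Fin n) K) (MvPolynomial (Fin n) K ⧸ J)
      = {Pj K n h}) :
    ∃ N, 0 < N ∧ xpw h N ∈ I.carrier := by
  classical
  set x : MvPolynomial (Fin n) K := X (⟨h - 1, by omega⟩ : Fin n) with hx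
  have hxmono : ∀ N : ℕ, phiM K n (xpw h N) = x ^ N := by
    intro N
    have hfs : toF n (xpw h N) = Finsupp.single (⟨h - 1, by omega⟩ : Fin n) N := by
      ext k
      rw [toF_apply, Finsupp.single_apply]
      show (if (k : ℕ) + 1 = h then N else 0) = _
      by_cases hk : (k : ℕ) + 1 = h
      · rw [if_pos hk, if_pos (Fin.ext (by simp; omega))]
      · rw [if_neg hk, if_neg (by simp [Fin.ext_iff]; omega)]
    rw [phiM, hfs, hx, X_pow_eq_monomial]
  have mono : Monotone (fun l => J.colon (Ideal.span {x ^ l})) := by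
    intro l l' hll f hf
    rw [Ideal.mem_colon_span_singleton] at hf ⊢
    have hxe : f * x ^ l' = f * x ^ l * x ^ (l' - l) := by
      rw [mul_assoc, ← pow_add, Nat.add_sub_cancel' hll]
    rw [hxe]
    exact J.mul_mem_right _ hf
  obtain ⟨N, hN⟩ := monotone_stabilizes_iff_noetherian.mpr
    inferInstance ⟨fun l => J.colon (Ideal.span {x ^ l}), mono⟩
  by_cases hxN : x ^ (N + 1) ∈ J
  · exact ⟨N + 1, Nat.succ_pos _, (phi_mem_iff I hJ (inVars_xpw hh1 hhn)).mp
      (by rw [hxmono]; exact hxN)⟩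
  exfalso
  set T : Ideal (MvPolynomial (Fin n) K) := J.colon (Ideal.span {x ^ N}) with hT
  have hTN : T = J.colon (Ideal.span {x ^ (N + 1)}) := hN (N + 1) (Nat.le_succ N)
  have hTtop : T ≠ ⊤ := by
    intro ht
    have h1T : (1 : MvPolynomial (Fin n) K) ∈ T := ht ▸ Submodule.mem_top
    rw [hTN, Ideal.mem_colon_span_singleton, one_mul] at h1T
    exact hxN h1T
  haveI : Nontrivial (MvPolynomial (Fin n) K ⧸ T) := Ideal.Quotient.nontrivial_iff.mpr hTtop
  set θ : MvPolynomial (Fin n) K →ₗ[MvPolynomial (Fin n) K] (MvPolynomial (Fin n) K ⧸ J) :=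
    (J : Submodule (MvPolynomial (Fin n) K) (MvPolynomial (Fin n) K)).mkQ ∘ₗ
      LinearMap.mulLeft (MvPolynomial (Fin n) K) (x ^ N) with hθ
  have hker : ∀ f, θ f = 0 ↔ f ∈ T := by
    intro f
    rw [hθ]
    simp only [LinearMap.comp_apply, LinearMap.mulLeft_apply, Submodule.mkQ_apply]
    rw [Submodule.Quotient.mk_eq_zero, hT, Ideal.mem_colon_span_singleton, mul_comm]
  set ψ := T.liftQ θ (fun f hf => LinearMap.mem_ker.mpr ((hker f).mpr hf)) with hψ
  have hinj : Function.Injective ψ := by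
    rw [← LinearMap.ker_eq_bot, hψ]
    apply Submodule.ker_liftQ_eq_bot
    intro f hf
    exact (hker f).mp (LinearMap.mem_ker.mp hf)
  obtain ⟨Q, hQ⟩ := associatedPrimes.nonempty (MvPolynomial (Fin n) K)
    (MvPolynomial (Fin n) K ⧸ T)
  have hQJ : Q ∈ associatedPrimes (MvPolynomial (Fin n) K) (MvPolynomial (Fin n) K ⧸ J) :=
    hQ.map_of_injective ψ hinj
  rw [hass, Set.mem_singleton_iff] at hQJ
  obtain ⟨Qp, z, hz⟩ := isAssociatedPrime_iff.mp hQ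
  obtain ⟨g, rfl⟩ := Submodule.Quotient.mk_surjective (T : Submodule _ _) z
  have hznz : (Submodule.Quotient.mk g : MvPolynomial (Fin n) K ⧸ T) ≠ 0 := by
    intro h0
    apply Qp.ne_top
    rw [hz, h0, Submodule.eq_top_iff']
    intro r
    rw [Submodule.mem_colon_singleton, smul_zero]
    exact Submodule.zero_mem _
  have hxQ : x ∈ Q := hQJ ▸ X_mem_Pj (by simp; omega)
  rw [hz, Submodule.mem_colon_singleton, Submodule.mem_bot, ← Submodule.Quotient.mk_smul,
    Submodule.Quotient.mk_eq_zero] at hxQ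
  have hgT : g ∈ T := by
    rw [hTN, Ideal.mem_colon_span_singleton]
    have hxg : (x * g) * x ^ N ∈ J := by
      have hmem : x • g ∈ T := hxQ
      rw [hT, Ideal.mem_colon_span_singleton] at hmem
      rwa [smul_eq_mul] at hmem
    have hre : g * x ^ (N + 1) = (x * g) * x ^ N := by ring
    rw [hre]
    exact hxg
  exact hznz ((Submodule.Quotient.mk_eq_zero _).mpr hgT)

end Aux

open MvPolynomial in
/-- Let `I ⊆ S = k[x₁,…,xₙ]` be the ideal spanned by the monomials of a
stable monomial ideal and `1 ≤ h ≤ n`. If the set of associated primes of `S/I` is exactly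
`{(x₁,…,x_h)}`, then `h = max{max(m) : m ∈ G(I)}` and there is a unique `l > 0` with
`x_h^l ∈ G(I)`. -/
theorem statement2 {K : Type*} [Field K] {n : ℕ} (h : ℕ) (h1 : 1 ≤ h) (hn : h ≤ n)
    (I : MonIdeal n) (hI : Stable I)
    (J : Ideal (MvPolynomial (Fin n) K))
    (hJ : J = Ideal.span
      {f | ∃ m ∈ I.carrier, f = ∏ i : Fin n, MvPolynomial.X i ^ m ((i : ℕ) + 1)})
    (hass : associatedPrimes (MvPolynomial (Fin n) K) (MvPolynomial (Fin n) K ⧸ J) =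
      {Ideal.span {f | ∃ i : Fin n, (i : ℕ) + 1 ≤ h ∧ f = MvPolynomial.X i}}) :
    hMax I = h ∧ ∃! l : ℕ, 0 < l ∧ xpw h l ∈ minGens I := by
  classical
  have hgen : J = Ideal.span (genSet K I) := hJ
  have hass' : associatedPrimes (MvPolynomial (Fin n) K) (MvPolynomial (Fin n) K ⧸ J)
      = {Pj K n h} := hass
  have hPmem : Pj K n h ∈ associatedPrimes (MvPolynomial (Fin n) K)
      (MvPolynomial (Fin n) K ⧸ J) := by
    rw [hass']
    exact rfl
  obtain ⟨hprime, y, hy⟩ := isAssociatedPrime_iff.mp hPmem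
  obtain ⟨g, rfl⟩ := Submodule.Quotient.mk_surjective (J : Submodule _ _) y
  have hynz : (Submodule.Quotient.mk g : MvPolynomial (Fin n) K ⧸ J) ≠ 0 := by
    intro h0
    apply hprime.ne_top
    rw [hy, h0, Submodule.eq_top_iff']
    intro r
    rw [Submodule.mem_colon_singleton, smul_zero]
    exact Submodule.zero_mem _
  have hgJ : g ∉ J := fun hc => hynz ((Submodule.Quotient.mk_eq_zero _).mpr hc)
  have hJtop : J ≠ ⊤ := fun ht => hgJ (ht ▸ Submodule.mem_top)
  have h0c : (0 : Mon) ∉ I.carrier := by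
    intro hc
    apply hJtop
    rw [Ideal.eq_top_iff_one]
    have hmem : phiM K n (0 : Mon) ∈ J :=
      (phi_mem_iff I hgen (fun i hi => absurd rfl hi)).mpr hc
    have heq1 : phiM K n (0 : Mon) = 1 := by
      rw [phiM]
      have h0f : toF n (0 : Mon) = 0 := by ext k; rfl
      rw [h0f, monomial_zero', C_1]
    rwa [heq1] at hmem
  have hn1 : 1 ≤ n := le_trans h1 hn
  have hX0g : (X (⟨0, by omega⟩ : Fin n) : MvPolynomial (Fin n) K) * g ∈ J := by
    have hx0 : (X (⟨0, by omega⟩ : Fin n) : MvPolynomial (Fin n) K) ∈ Pj K n h :=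
      X_mem_Pj (by simp; omega)
    rw [hy, Submodule.mem_colon_singleton, Submodule.mem_bot, ← Submodule.Quotient.mk_smul,
      Submodule.Quotient.mk_eq_zero] at hx0
    rwa [smul_eq_mul] at hx0
  have hcar : I.carrier.Nonempty := by
    rcases Set.eq_empty_or_nonempty I.carrier with hemp | hne
    · exfalso
      have hgemp : genSet K I = ∅ := by
        ext f
        simp [genSet, hemp]
      rw [hgen, hgemp, Ideal.span_empty, Submodule.mem_bot] at hX0g
      refine mul_ne_zero (X_ne_zero _) (fun hg0 : g = 0 => hgJ ?_) hX0g
      rw [hg0]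
      exact J.zero_mem
    · exact hne
  obtain ⟨mc, hmc⟩ := hcar
  obtain ⟨u0, hu0, -⟩ := exists_minGen I hmc
  have hbdd : BddAbove {j | ∃ m ∈ minGens I, mmax m = j} := by
    refine ⟨n, ?_⟩
    rintro j ⟨m, hm, rfl⟩
    exact mmax_le_n (I.vars_mem m hm.1) (mon_ne_zero_of_mem I h0c hm.1)
  have hSne : {j | ∃ m ∈ minGens I, mmax m = j}.Nonempty := ⟨mmax u0, u0, hu0, rfl⟩
  have hatt : hMax I ∈ {j | ∃ m ∈ minGens I, mmax m = j} := Nat.sSup_mem hSne hbdd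
  obtain ⟨m0, hm0, hm0max⟩ := hatt
  have hall : ∀ u ∈ minGens I, mmax u ≤ mmax m0 := by
    intro u hu
    rw [hm0max]
    exact le_csSup hbdd ⟨u, hu, rfl⟩
  have hassoc : Pj K n (mmax m0) ∈ associatedPrimes (MvPolynomial (Fin n) K)
      (MvPolynomial (Fin n) K ⧸ J) := isAssoc_Pj I hI hgen h0c hm0 hall
  rw [hass', Set.mem_singleton_iff] at hassoc
  have hm0v := I.vars_mem m0 hm0.1
  have hm0nz := mon_ne_zero_of_mem I h0c hm0.1
  have hmmh : mmax m0 = h :=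
    Pj_inj (one_le_mmax hm0v hm0nz) (mmax_le_n hm0v hm0nz) h1 hn hassoc
  refine ⟨by rw [← hm0max, hmmh], ?_⟩
  obtain ⟨N, hNpos, hNmem⟩ := pure_power I hgen h1 hn hass'
  have hex : ∃ l, 0 < l ∧ xpw h l ∈ I.carrier := ⟨N, hNpos, hNmem⟩
  obtain ⟨hl0pos, hl0mem⟩ := Nat.find_spec hex
  set l0 := Nat.find hex with hl0def
  have hming : xpw h l0 ∈ minGens I := by
    refine ⟨hl0mem, ?_⟩
    intro m' hm' hle
    have hm'h : ∀ i, i ≠ h → m' i = 0 := by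
      intro i hi
      have h2 : m' i ≤ xpw h l0 i := hle i
      simpa [xpw, hi] using h2
    have hform : m' = xpw h (m' h) := by
      funext i
      by_cases hi : i = h
      · subst hi; simp [xpw]
      · rw [hm'h i hi]; simp [xpw, hi]
    have hpos : 0 < m' h := by
      rcases Nat.eq_zero_or_pos (m' h) with h0' | h0'
      · exfalso
        apply h0c
        have hz : m' = 0 := by
          funext i
          by_cases hi : i = h
          · subst hi; exact h0'
          · exact hm'h i hi
        exact hz ▸ hm'
      · exact h0'
    have hge : l0 ≤ m' h := Nat.find_min' hex ⟨hpos, hform ▸ hm'⟩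
    have hle' : m' h ≤ l0 := by
      have h2 : m' h ≤ xpw h l0 h := hle h
      simpa [xpw] using h2
    rw [hform, show m' h = l0 by omega]
  refine ⟨l0, ⟨hl0pos, hming⟩, ?_⟩
  rintro l' ⟨hl'pos, hl'min⟩
  rcases Nat.le_total l' l0 with hlle | hlle
  · have hxle : xpw h l' ≤ xpw h l0 := by
      intro i
      show (if i = h then l' else 0) ≤ (if i = h then l0 else 0)
      split <;> omega
    have heqx := hming.2 (xpw h l') hl'min.1 hxle
    have := congrFun heqx h
    simpa [xpw] using this
  · have hxle : xpw h l0 ≤ xpw h l' := by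
      intro i
      show (if i = h then l0 else 0) ≤ (if i = h then l' else 0)
      split <;> omega
    have heqx := hl'min.2 (xpw h l0) hl0mem hxle
    have := congrFun heqx h
    simpa [xpw] using this.symm

end Paper
end

section
/- Let I be a stable monomial ideal of k[x₁,…,xₙ], set h := max{max(m) : m ∈ G(I)}, and assume x_h^{l_I} ∈ G(I) for some l_I > 0 (the Cohen–Macaulay condition). Then for every m ∈ G(I) and every k ∈ supp(m), there exists an integer l > 0 such that (m/x_k)·x_h^l ∈ G(I). -/
namespace Paper

lemma natSSup_le {S : Set ℕ} {b : ℕ} (hb : ∀ i ∈ S, i ≤ b) : sSup S ≤ b := by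
  rcases S.eq_empty_or_nonempty with rfl | hne
  · simp
  · exact csSup_le hne hb

lemma natSSup_eq {S : Set ℕ} {b : ℕ} (hmem : b ∈ S) (hb : ∀ i ∈ S, i ≤ b) :
    sSup S = b :=
  le_antisymm (natSSup_le hb) (le_csSup ⟨b, hb⟩ hmem)

lemma mem_of_le_mem {n : ℕ} (I : MonIdeal n) {a b : Mon} (ha : a ∈ I.carrier)
    (hb : inVars n b) (hab : a ≤ b) : b ∈ I.carrier := by
  have h := I.mul_mem a ha (b - a) (fun i hi => by
    apply hb i
    have : (b - a) i = b i - a i := rfl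
    omega)
  have : a + (b - a) = b := by
    funext i
    have hai : a i ≤ b i := hab i
    show a i + (b i - a i) = b i
    omega
  rwa [this] at h

/-- Let `I` be a stable monomial ideal, `h = max{max(m) : m ∈ G(I)}`, and
suppose `x_h^{l_I} ∈ G(I)` for some `l_I > 0` (the Cohen–Macaulay condition). Then for every
`m ∈ G(I)` and every `k ∈ supp(m)` there is `l > 0` with `(m/x_k)·x_h^l ∈ G(I)`. -/
theorem statement3 {n : ℕ} (I : MonIdeal n) (hI : Stable I)
    (h : ℕ) (hh : hMax I = h)
    (lI : ℕ) (hlI : 0 < lI) (hCM : xpw h lI ∈ minGens I) :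
    ∀ m ∈ minGens I, ∀ k, m k ≠ 0 →
      ∃ l : ℕ, 0 < l ∧ (m - e k) + xpw h l ∈ minGens I := by
  -- every variable occurring in a minimal generator has index ≤ h
  have hbddT : ∀ j ∈ {j | ∃ m ∈ minGens I, mmax m = j}, j ≤ n := by
    rintro j ⟨m0, hm0, rfl⟩
    exact natSSup_le (fun i hi => (I.vars_mem m0 hm0.1 i hi).2)
  have hsupp : ∀ m ∈ minGens I, ∀ i, m i ≠ 0 → i ≤ h := by
    intro m hm i hi
    have h1 : i ≤ mmax m :=
      le_csSup ⟨n, fun j hj => (I.vars_mem m hm.1 j hj).2⟩ hi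
    have h2 : mmax m ≤ h := by
      rw [← hh]
      exact le_csSup ⟨n, hbddT⟩ ⟨m, hm, rfl⟩
    omega
  intro m hm k hk
  have hmI : m ∈ I.carrier := hm.1
  have hmv : inVars n m := I.vars_mem m hmI
  set m' : Mon := m - e k with hm'def
  have hm'app : ∀ i, m' i = m i - e k i := fun i => rfl
  have hm'le : m' ≤ m := fun i => Nat.sub_le _ _
  have hm'v : inVars n m' := fun i hi => hmv i (by rw [hm'app] at hi; omega)
  have hm'supp : ∀ i, m' i ≠ 0 → i ≤ h := by
    intro i hi
    exact hsupp m hm i (by rw [hm'app] at hi; omega)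
  have hm'not : m' ∉ I.carrier := by
    intro hmem
    have heq := congrFun (hm.2 m' hmem hm'le) k
    have h2 : m k - (if k = k then 1 else 0) = m k := heq
    rw [if_pos rfl] at h2
    omega
  -- h is a legit variable
  have hhIc : xpw h lI ∈ I.carrier := hCM.1
  have hh1 : 1 ≤ h := (I.vars_mem _ hhIc h (by simp [xpw]; omega)).1
  -- the set of exponents t with m' · x_h^t ∈ I
  set S : Set ℕ := {t | m' + xpw h t ∈ I.carrier} with hSdef
  have hSne : lI ∈ S := by
    have := I.mul_mem _ hhIc m' hm'v
    show m' + xpw h lI ∈ I.carrier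
    rwa [add_comm]
  set l : ℕ := sInf S with hldef
  have hlS : m' + xpw h l ∈ I.carrier := Nat.sInf_mem ⟨lI, hSne⟩
  have hl0 : 0 < l := by
    rcases Nat.eq_zero_or_pos l with h0 | hpos
    · exfalso
      apply hm'not
      have h00 : m' + xpw h 0 ∈ I.carrier := by rw [← h0]; exact hlS
      have : m' + xpw h 0 = m' := by
        funext i; show m' i + (if i = h then 0 else 0) = m' i; simp
      rwa [this] at h00
    · exact hpos
  -- the candidate generator
  set w : Mon := m' + xpw h l with hwdef
  have hwapp : ∀ i, w i = m' i + (if i = h then l else 0) := fun i => rfl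
  have hwv : inVars n w := I.vars_mem w hlS
  refine ⟨l, hl0, hlS, ?_⟩
  -- minimality of w
  intro m'' hm'' hle
  by_contra hne
  obtain ⟨j0, hj0⟩ : ∃ j0, m'' j0 < w j0 := by
    by_contra hno
    push_neg at hno
    exact hne (le_antisymm hle hno)
  -- v = w / x_{j0} is in I
  set v : Mon := w - e j0 with hvdef
  have hvapp : ∀ i, v i = w i - (if i = j0 then 1 else 0) := fun i => rfl
  have hvI : v ∈ I.carrier := by
    apply mem_of_le_mem I hm''
    · exact fun i hi => hwv i (by rw [hvapp] at hi; omega)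
    · intro i
      have h1 : m'' i ≤ w i := hle i
      show m'' i ≤ w i - (if i = j0 then 1 else 0)
      by_cases hij : i = j0
      · rw [if_pos hij]; subst hij; omega
      · rw [if_neg hij]; omega
  -- in both cases we derive m' + xpw h (l-1) ∈ I, contradicting minimality of l
  have key : m' + xpw h (l - 1) ∈ I.carrier := by
    by_cases hj0h : j0 = h
    · -- v itself equals m' + x_h^{l-1}
      have : v = m' + xpw h (l - 1) := by
        funext i
        rw [hvapp, hwapp]
        show _ = m' i + (if i = h then l - 1 else 0)
        by_cases hih : i = h
        · subst hih; rw [hj0h]; simp; omega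
        · simp [hih, hj0h ▸ hih]
      rwa [this] at hvI
    · -- use stability on v, whose max is h
      have hwj0 : w j0 = m' j0 := by rw [hwapp]; simp [hj0h]
      have hm'j0 : m' j0 ≠ 0 := by
        rw [← hwj0]; omega
      have hj01 : 1 ≤ j0 := (hm'v j0 hm'j0).1
      have hj0lt : j0 < h := lt_of_le_of_ne (hm'supp j0 hm'j0) hj0h
      have hvh : v h = m' h + l := by
        rw [hvapp, hwapp]
        simp [Ne.symm hj0h]
      have hvmax : mmax v = h := by
        apply natSSup_eq
        · show v h ≠ 0
          rw [hvh]; omega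
        · intro i hi
          have hi' : v i ≠ 0 := hi
          rw [hvapp, hwapp] at hi'
          by_cases hih : i = h
          · omega
          · simp [hih] at hi'
            exact hm'supp i (by omega)
      have hstab := hI v hvI j0 hj01 (by rw [hvmax]; exact hj0lt)
      rw [hvmax] at hstab
      have : (v - e h) + e j0 = m' + xpw h (l - 1) := by
        funext i
        show (v i - (if i = h then 1 else 0)) + (if i = j0 then 1 else 0)
            = m' i + (if i = h then l - 1 else 0)
        rw [hvapp, hwapp]
        by_cases hih : i = h
        · subst hih; simp [Ne.symm hj0h]; omega
        · by_cases hij : i = j0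
          · subst hij; simp [hih]; omega
          · simp [hih, hij]
      rwa [this] at hstab
  have : l ≤ l - 1 := Nat.sInf_le key
  omega

end Paper
end

section
/- Let I be a Borel fixed ideal of k[x₁,…,xₙ] and Ĩ = bpol(I) its polarization. Let c : c₀ ⋖* c₁ ⋖* ⋯ ⋖* c_q be an unrefinable chain in Γ_P̃^* with q ≥ 2 and label sequence λ(c) = (λ₁,…,λ_q). If 2 ≤ r ≤ q and λ_r < 0, then there exists an unrefinable chain c′ from c₀ to c_q in Γ_P̃^* whose label sequence is obtained from λ(c) by interchanging λ_{r−1} and λ_r. Consequently, a negative entry of λ(c) can be shifted to any earlier position by a chain in the same interval. -/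
namespace Paper

/-- `psum m i = Σ_{l=1}^{i} deg_l(m)`. -/
def psum (m : Mon) (i : ℕ) : ℕ := ∑ l ∈ Finset.Icc 1 i, m l

/-- The polarization `bpol(m)` of a monomial `m`, as a (squarefree) monomial in the
variables `x_{i,j}`: for `m = x_{α₁}⋯x_{α_e}` with `α₁ ≤ ⋯ ≤ α_e`,
`bpol(m) = ∏_t x_{α_t,t}`. -/
def bpol (m : Mon) : ℕ × ℕ → ℕ :=
  fun p => if psum m (p.1 - 1) < p.2 ∧ p.2 ≤ psum m p.1 then 1 else 0

/-- The smallest `k > s` with `k ∈ supp(m)`. -/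
noncomputable def nextv (m : Mon) (s : ℕ) : ℕ := sInf {k | s < k ∧ m k ≠ 0}

/-- `f_s(m) = (m/x_s)·x_k` where `k = min{k > s : k ∈ supp(m)}`. -/
noncomputable def fsop (m : Mon) (s : ℕ) : Mon := (m - e s) + e (nextv m s)

/-- Pairs `(F̃, m)` (with `m̃ = bpol m`) underlying the modified Eliahou–Kervaire
resolution of `bpol(I)`. -/
abbrev APT : Type := Finset (ℕ × ℕ) × Mon

/-- `(F̃, bpol m)` is an admissible pair for `bpol(I)`:
`F̃ = {(i₁,j₁),…,(i_q,j_q)}` with `i₁ < ⋯ < i_q < max(m)` and `j_r = 1 + Σ_{l ≤ i_r} deg_l(m)`. -/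
def AdmT {n : ℕ} (I : MonIdeal n) (p : APT) : Prop :=
  p.2 ∈ minGens I ∧ ∀ a ∈ p.1, 1 ≤ a.1 ∧ a.1 < mmax p.2 ∧ a.2 = 1 + psum p.2 a.1

/-- The covering relation of the poset `Γ_P̃` (with `none` playing the role of `0̂`):
`coversT I g x y` means `x ⋗ y`. -/
def coversT {n : ℕ} (I : MonIdeal n) (g : Mon → Mon) (x y : Option APT) : Prop :=
  match x, y with
  | some p, some q => AdmT I p ∧ AdmT I q ∧ ∃ a ∈ p.1,
      q = (p.1.erase a, p.2) ∨ q = (p.1.erase a, g (fsop p.2 a.1))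
  | some p, none => AdmT I p ∧ p.1 = (∅ : Finset (ℕ × ℕ))
  | _, _ => False

/-- The strict order of `Γ_P̃`. -/
def ltGT {n : ℕ} (I : MonIdeal n) (g : Mon → Mon) (x y : Option APT) : Prop :=
  Relation.TransGen (fun a b => coversT I g b a) x y

/-- The order of `Γ_P̃`. -/
def leGT {n : ℕ} (I : MonIdeal n) (g : Mon → Mon) (x y : Option APT) : Prop :=
  x = y ∨ ltGT I g x y

/-- The interval `[0̂, σ]` in `Γ_P̃`. -/
def belowT {n : ℕ} (I : MonIdeal n) (g : Mon → Mon) (σ : Option APT) : Set (Option APT) :=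
  {x | leGT I g x σ}

/-- `lstepT I g x y l` : `x ⋖* y` in the dual poset `Γ_P̃^*` (i.e. `x ⋗ y` in `Γ_P̃`) and
the edge label `λ(x ⋖* y)` is `l`. -/
def lstepT {n : ℕ} (I : MonIdeal n) (g : Mon → Mon) (x y : Option APT) (l : ℤ) : Prop :=
  match x, y with
  | some p, some q => AdmT I p ∧ AdmT I q ∧ ∃ a ∈ p.1,
      (q = (p.1.erase a, p.2) ∧ l = -(a.1 : ℤ)) ∨
      (q = (p.1.erase a, g (fsop p.2 a.1)) ∧ l = (a.1 : ℤ))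
  | some p, none => AdmT I p ∧ p.1 = (∅ : Finset (ℕ × ℕ)) ∧ l = 0
  | _, _ => False

/-- The set `F̃` of the full admissible pair `(F̃, bpol m)` of `m` (for `max(m) = h`). -/
def fullF (h : ℕ) (m : Mon) : Finset (ℕ × ℕ) :=
  (Finset.Icc 1 (h - 1)).image (fun i => (i, 1 + psum m i))

lemma admT_erase {n : ℕ} {I : MonIdeal n} {p : APT} (h : AdmT I p) (a : ℕ × ℕ) :
    AdmT I (p.1.erase a, p.2) :=
  ⟨h.1, fun b hb => h.2 b (Finset.mem_of_mem_erase hb)⟩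

lemma swap_step {n : ℕ} (I : MonIdeal n) (g : Mon → Mon)
    (x y z : Option APT) (l₁ l₂ : ℤ)
    (h₁ : lstepT I g x y l₁) (h₂ : lstepT I g y z l₂) (hneg : l₂ < 0) :
    ∃ y', lstepT I g x y' l₂ ∧ lstepT I g y' z l₁ := by
  rcases x with _ | p <;> rcases y with _ | p' <;> rcases z with _ | p'' <;>
    simp only [lstepT] at h₁ h₂ ⊢
  · obtain ⟨-, -, h⟩ := h₂; omega
  · obtain ⟨hp, hp', b, hb, h1c⟩ := h₁
    obtain ⟨_, hp'', a, ha, h2c⟩ := h₂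
    rcases h2c with ⟨hz, hl2⟩ | ⟨hz, hl2⟩
    swap
    · exact absurd hneg (by have := hp'.2 a ha; omega)
    rcases h1c with ⟨hy, hl1⟩ | ⟨hy, hl1⟩
    · -- both negative
      have haP : a ∈ p.1.erase b := by rw [hy] at ha; exact ha
      have hab : a ≠ b := (Finset.ne_of_mem_erase haP)
      refine ⟨some (p.1.erase a, p.2), ⟨hp, admT_erase hp a, a,
        Finset.mem_of_mem_erase haP, Or.inl ⟨rfl, hl2⟩⟩,
        ⟨admT_erase hp a, hp'', b, Finset.mem_erase.2 ⟨fun h => hab h.symm, hb⟩,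
        Or.inl ⟨?_, hl1⟩⟩⟩
      rw [hz, hy]
      simp [Finset.erase_right_comm]
    · -- first positive, second negative
      have haP : a ∈ p.1.erase b := by rw [hy] at ha; exact ha
      have hab : a ≠ b := (Finset.ne_of_mem_erase haP)
      refine ⟨some (p.1.erase a, p.2), ⟨hp, admT_erase hp a, a,
        Finset.mem_of_mem_erase haP, Or.inl ⟨rfl, hl2⟩⟩,
        ⟨admT_erase hp a, hp'', b, Finset.mem_erase.2 ⟨fun h => hab h.symm, hb⟩,
        Or.inr ⟨?_, hl1⟩⟩⟩
      rw [hz, hy]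
      simp [Finset.erase_right_comm]

lemma swap_chain {n : ℕ} (I : MonIdeal n) (g : Mon → Mon)
    (q : ℕ) (c : ℕ → Option APT) (lab : ℕ → ℤ)
    (hchain : ∀ t, t < q → lstepT I g (c t) (c (t + 1)) (lab (t + 1)))
    (j : ℕ) (hj1 : 1 ≤ j) (hj2 : j + 1 ≤ q) (hneg : lab (j + 1) < 0) :
    ∃ (c' : ℕ → Option APT) (lab' : ℕ → ℤ), c' 0 = c 0 ∧ c' q = c q ∧
      (∀ t, t < q → lstepT I g (c' t) (c' (t + 1)) (lab' (t + 1))) ∧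
      (∀ t, lab' t = if t = j then lab (j + 1) else if t = j + 1 then lab j else lab t) := by
  obtain ⟨y', hs1, hs2⟩ := swap_step I g (c (j - 1)) (c j) (c (j + 1)) (lab j) (lab (j + 1))
    (by have := hchain (j - 1) (by omega); rwa [Nat.sub_add_cancel hj1] at this)
    (hchain j (by omega)) hneg
  refine ⟨Function.update c j y',
    fun t => if t = j then lab (j + 1) else if t = j + 1 then lab j else lab t,
    Function.update_of_ne (by omega) _ _, Function.update_of_ne (by omega) _ _, ?_,
    fun t => rfl⟩
  intro t ht
  beta_reduce
  by_cases h2 : t = j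
  · subst h2
    rw [Function.update_self, Function.update_of_ne (by omega),
      if_neg (by omega), if_pos rfl]
    exact hs2
  by_cases h1 : t + 1 = j
  · rw [Function.update_of_ne h2, h1, Function.update_self, if_pos rfl]
    have : t = j - 1 := by omega
    rw [this]
    exact hs1
  · rw [Function.update_of_ne h2, Function.update_of_ne h1,
      if_neg h1, if_neg (by omega)]
    exact hchain t ht

/-- Let `I` be a Borel fixed ideal with decomposition function `g`, and
`c : c₀ ⋖* ⋯ ⋖* c_q` an unrefinable chain in `Γ_P̃^*` with `q ≥ 2` and labels
`λ₁,…,λ_q`. If `2 ≤ r ≤ q` and `λ_r < 0`, then the contiguous labels `λ_{r−1}, λ_r` can be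
interchanged by another unrefinable chain from `c₀` to `c_q`; consequently a negative entry
can be shifted to any earlier position. -/
theorem statement10 {n : ℕ} (I : MonIdeal n) (hI : Borel I)
    (g : Mon → Mon) (hg : IsDecompFn I g)
    (q : ℕ) (hq : 2 ≤ q) (c : ℕ → Option APT) (lab : ℕ → ℤ)
    (hchain : ∀ t, t < q → lstepT I g (c t) (c (t + 1)) (lab (t + 1)))
    (r : ℕ) (hr1 : 2 ≤ r) (hr2 : r ≤ q) (hneg : lab r < 0) :
    (∃ (c' : ℕ → Option APT) (lab' : ℕ → ℤ),
      c' 0 = c 0 ∧ c' q = c q ∧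
      (∀ t, t < q → lstepT I g (c' t) (c' (t + 1)) (lab' (t + 1))) ∧
      (∀ t, 1 ≤ t → t ≤ q →
        lab' t = if t = r - 1 then lab r else if t = r then lab (r - 1) else lab t)) ∧
    (∀ s, 1 ≤ s → s < r →
      ∃ (c' : ℕ → Option APT) (lab' : ℕ → ℤ),
        c' 0 = c 0 ∧ c' q = c q ∧
        (∀ t, t < q → lstepT I g (c' t) (c' (t + 1)) (lab' (t + 1))) ∧
        (∀ t, 1 ≤ t → t ≤ q →
          lab' t = if t < s then lab t else if t = s then lab r
            else if t ≤ r then lab (t - 1) else lab t)) := by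
  have key : ∀ k s, s + k = r → 1 ≤ s →
      ∃ (c' : ℕ → Option APT) (lab' : ℕ → ℤ),
        c' 0 = c 0 ∧ c' q = c q ∧
        (∀ t, t < q → lstepT I g (c' t) (c' (t + 1)) (lab' (t + 1))) ∧
        (∀ t, 1 ≤ t → t ≤ q →
          lab' t = if t < s then lab t else if t = s then lab r
            else if t ≤ r then lab (t - 1) else lab t) := by
    intro k
    induction k with
    | zero =>
      intro s hs _
      refine ⟨c, lab, rfl, rfl, hchain, ?_⟩
      intro t ht1 ht2
      have hsr : s = r := by omega
      subst hsr
      split_ifs with h1 h2 h3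
      · rfl
      · rw [h2]
      · exfalso; omega
      · rfl
    | succ k ih =>
      intro s hs hs1
      obtain ⟨c', lab', h0, hq', hch, hlab⟩ := ih (s + 1) (by omega) (by omega)
      have hs1q : s + 1 ≤ q := by omega
      have hneg' : lab' (s + 1) < 0 := by
        rw [hlab (s + 1) (by omega) (by omega), if_neg (by omega), if_pos rfl]
        exact hneg
      obtain ⟨c'', lab'', h0', hq'', hch', hlab'⟩ :=
        swap_chain I g q c' lab' hch s hs1 hs1q hneg'
      refine ⟨c'', lab'', h0'.trans h0, hq''.trans hq', hch', ?_⟩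
      intro t ht1 ht2
      rw [hlab' t]
      by_cases h1 : t = s
      · rw [if_pos h1, if_neg (by omega), if_pos h1,
          hlab (s + 1) (by omega) (by omega), if_neg (by omega), if_pos rfl]
      by_cases h2 : t = s + 1
      · rw [if_neg h1, if_pos h2, if_neg (by omega), if_neg h1,
          if_pos (by omega), hlab s (by omega) (by omega), if_pos (by omega)]
        congr 1
        omega
      · rw [if_neg h1, if_neg h2, hlab t ht1 ht2]
        by_cases h3 : t < s
        · rw [if_pos (by omega), if_pos h3]
        · rw [if_neg (by omega), if_neg h3, if_neg (by omega), if_neg h1]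
  constructor
  · obtain ⟨c', lab', h0, hq', hch, hlab⟩ := key 1 (r - 1) (by omega) (by omega)
    refine ⟨c', lab', h0, hq', hch, ?_⟩
    intro t ht1 ht2
    rw [hlab t ht1 ht2]
    split_ifs with h1 h2 h3 h4 <;> first | rfl | (exfalso; omega) | (congr 1; omega)
  · intro s hs1 hs2
    exact key (r - s) s (by omega) hs1


end Paper
end
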